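/- A morphism of causal-nets is a coarse-graining if and only if it can be written as a composition of finitely many morphisms each of which is an isomorphism or a fundamental coarse-graining (merging two vertices, coarse-graining two parallel edges, or contracting an edge). -/

import Mathlib

open CategoryTheory

namespace CausalNets

/-- Acyclicity condition for raw directed-multigraph data: every directed cycle
has length zero. -/
def NoCycleData (V E : Type) (s t : E → V) : Prop :=
  letI : Quiver V := ⟨fun a b => { e : E // s e = a ∧ t e = b }⟩
  ∀ (v : V) (p : Quiver.Path v v), p.length = 0

/-- A causal-net: a finite acyclic directed multigraph (isolated vertices and
parallel edges allowed). -/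
structure CausalNet where
  V : Type
  E : Type
  src : E → V
  tgt : E → V
  fintypeV : Fintype V
  fintypeE : Fintype E
  acyclic : NoCycleData V E src tgt

attribute [instance] CausalNet.fintypeV CausalNet.fintypeE

instance CausalNet.quiver (G : CausalNet) : Quiver G.V :=
  ⟨fun a b => { e : G.E // G.src e = a ∧ G.tgt e = b }⟩

/-- The category `Cau` of causal-nets: a morphism `G ⟶ H` is a functor between
the path categories `Paths G.V ⥤ Paths H.V`. -/
instance : Category CausalNet where
  Hom G H := Paths G.V ⥤ Paths H.V
  id G := 𝟭 (Paths G.V)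
  comp φ ψ := φ ⋙ ψ

variable {G H K : CausalNet}

/-- The action of a morphism of causal-nets on vertices (objects). -/
def vmap (φ : G ⟶ H) : G.V → H.V := (φ : Paths G.V ⥤ Paths H.V).obj

/-- The action of a morphism of causal-nets on directed paths (morphisms). -/
def pmap (φ : G ⟶ H) {a b : G.V} (p : Quiver.Path a b) :
    Quiver.Path (vmap φ a) (vmap φ b) :=
  (φ : Paths G.V ⥤ Paths H.V).map p

/-- The quiver arrow corresponding to an edge. -/
def edgeHom (G : CausalNet) (e : G.E) : G.src e ⟶ G.tgt e := ⟨e, rfl, rfl⟩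

/-- The directed path which is the image of the edge `e` under the morphism `φ`. -/
def edgePath (φ : G ⟶ H) (e : G.E) :
    Quiver.Path (vmap φ (G.src e)) (vmap φ (G.tgt e)) :=
  pmap φ (Quiver.Hom.toPath (edgeHom G e))

/-- The underlying edge of a quiver arrow. -/
def homEdge {a b : G.V} (f : a ⟶ b) : G.E := Subtype.val f

/-- The list of edges traversed by a directed path. -/
def pathEdges : {a b : G.V} → Quiver.Path a b → List G.E
  | _, _, Quiver.Path.nil => []
  | _, _, Quiver.Path.cons p f => pathEdges p ++ [homEdge f]

/-- The list of vertices visited by a directed path (including endpoints). -/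
def pathVertices : {a b : G.V} → Quiver.Path a b → List G.V
  | a, _, Quiver.Path.nil => [a]
  | _, b, Quiver.Path.cons p _ => pathVertices p ++ [b]

/-- An edge `e` is a contraction of `φ` if `φ(e)` has length `0`. -/
def IsContractionEdge (φ : G ⟶ H) (e : G.E) : Prop := (edgePath φ e).length = 0

/-- An edge `e` is a segment of `φ` if `φ(e)` has length `1`. -/
def IsSegmentEdge (φ : G ⟶ H) (e : G.E) : Prop := (edgePath φ e).length = 1

/-- An edge `e` is a subdivision of `φ` if `φ(e)` has length at least `2`. -/
def IsSubdivisionEdge (φ : G ⟶ H) (e : G.E) : Prop := 2 ≤ (edgePath φ e).length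

/-- `φ` maps the edge `e` to the length-one path consisting of the edge `h`. -/
def MapsToEdge (φ : G ⟶ H) (e : G.E) (h : H.E) : Prop :=
  pathEdges (edgePath φ e) = [h]

/-- A quotient: a morphism with no null-vertex and no null-edge. -/
def IsQuotientMor (φ : G ⟶ H) : Prop :=
  (∀ v : H.V, ∃ w : G.V, vmap φ w = v) ∧ ∀ h : H.E, ∃ e : G.E, MapsToEdge φ e h

/-- A coarse-graining: a quotient with no subdivision. -/
def IsCoarseGraining (φ : G ⟶ H) : Prop :=
  IsQuotientMor φ ∧ ∀ e : G.E, ¬ IsSubdivisionEdge φ e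

/-- A vertex-coarse-graining: a coarse-graining with no multiple-edge. -/
def IsVertexCoarseGraining (φ : G ⟶ H) : Prop :=
  IsCoarseGraining φ ∧
  ∀ (h : H.E) (e₁ e₂ : G.E), MapsToEdge φ e₁ h → MapsToEdge φ e₂ h → e₁ = e₂

/-- An edge-coarse-graining: a coarse-graining with no multiple-vertex and no
contraction. -/
def IsEdgeCoarseGraining (φ : G ⟶ H) : Prop :=
  IsCoarseGraining φ ∧ Function.Injective (vmap φ) ∧ ∀ e : G.E, ¬ IsContractionEdge φ e

/-- A merging: a vertex-coarse-graining with no contraction. -/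
def IsMerging (φ : G ⟶ H) : Prop :=
  IsVertexCoarseGraining φ ∧ ∀ e : G.E, ¬ IsContractionEdge φ e

/-- A fusion: a coarse-graining with no contraction. -/
def IsFusion (φ : G ⟶ H) : Prop :=
  IsCoarseGraining φ ∧ ∀ e : G.E, ¬ IsContractionEdge φ e

/-- An inclusion: a morphism injective on vertices and on directed paths
(an injective-on-objects faithful functor). -/
def IsInclusion (φ : G ⟶ H) : Prop :=
  Function.Injective (vmap φ) ∧
  ∀ (a b : G.V) (p q : Quiver.Path a b), pmap φ p = pmap φ q → p = q

/-- An embedding: an inclusion with no subdivision. -/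
def IsEmbedding (φ : G ⟶ H) : Prop :=
  IsInclusion φ ∧ ∀ e : G.E, ¬ IsSubdivisionEdge φ e

/-- An immersion: an inclusion such that images of distinct subdivision edges
share no edge. -/
def IsImmersion (φ : G ⟶ H) : Prop :=
  IsInclusion φ ∧
  ∀ e₁ e₂ : G.E, e₁ ≠ e₂ → IsSubdivisionEdge φ e₁ → IsSubdivisionEdge φ e₂ →
    ∀ h : H.E, h ∈ pathEdges (edgePath φ e₁) → h ∉ pathEdges (edgePath φ e₂)

/-- The internal vertices of a directed path (all visited vertices except the
two endpoints). -/
def internalVertices {a b : G.V} (p : Quiver.Path a b) : List G.V :=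
  ((pathVertices p).dropLast).tail

/-- A strong morphism: all internal vertices of images of subdivision edges are
null-vertices. -/
def IsStrong (φ : G ⟶ H) : Prop :=
  ∀ e : G.E, IsSubdivisionEdge φ e →
    ∀ v ∈ internalVertices (edgePath φ e), ∀ w : G.V, vmap φ w ≠ v

/-- A vertex-disjoint morphism: images of distinct subdivision edges share no
internal vertex. -/
def IsVertexDisjoint (φ : G ⟶ H) : Prop :=
  ∀ e₁ e₂ : G.E, e₁ ≠ e₂ → IsSubdivisionEdge φ e₁ → IsSubdivisionEdge φ e₂ →
    ∀ v : H.V, v ∈ internalVertices (edgePath φ e₁) → v ∉ internalVertices (edgePath φ e₂)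

/-- A topological embedding: a strong vertex-disjoint inclusion. -/
def IsTopologicalEmbedding (φ : G ⟶ H) : Prop :=
  IsInclusion φ ∧ IsStrong φ ∧ IsVertexDisjoint φ

/-- The edge `e` covers the vertex `v` if `v` occurs on the path `φ(e)`. -/
def Covers (φ : G ⟶ H) (e : G.E) (v : H.V) : Prop :=
  v ∈ pathVertices (edgePath φ e)

/-- An isolated vertex: a vertex incident to no edge. -/
def IsolatedVertex (G : CausalNet) (v : G.V) : Prop :=
  ∀ e : G.E, G.src e ≠ v ∧ G.tgt e ≠ v

/-- A subdivision morphism: a topological embedding such that every non-isolated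
vertex of the codomain is covered and every isolated vertex of the codomain is a
simple-vertex. -/
def IsSubdivisionMor (φ : G ⟶ H) : Prop :=
  IsTopologicalEmbedding φ ∧
  (∀ v : H.V, ¬ IsolatedVertex H v → ∃ e : G.E, Covers φ e v) ∧
  (∀ v : H.V, IsolatedVertex H v → ∃! w : G.V, vmap φ w = v)

theorem mapPath_length {V W : Type} [Quiver V] [Quiver W] (F : V ⥤q W) :
    ∀ {a b : V} (p : Quiver.Path a b), (F.mapPath p).length = p.length := by
  intro a b p
  induction p with
  | nil => rfl
  | cons q f ih =>
      show ((F.mapPath q).cons (F.map f)).length = (q.cons f).length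
      rw [Quiver.Path.length_cons, Quiver.Path.length_cons, ih]

theorem noCycleData_of_map {V₁ E₁ : Type} (s₁ t₁ : E₁ → V₁) (G : CausalNet)
    (f : V₁ → G.V) (g : E₁ → G.E)
    (hs : ∀ e, G.src (g e) = f (s₁ e)) (ht : ∀ e, G.tgt (g e) = f (t₁ e)) :
    NoCycleData V₁ E₁ s₁ t₁ := by
  letI : Quiver V₁ := ⟨fun a b => { e : E₁ // s₁ e = a ∧ t₁ e = b }⟩
  intro v p
  let F : V₁ ⥤q G.V :=
    { obj := f
      map := fun {a b} e =>
        ⟨g (Subtype.val e), by rw [hs, (Subtype.prop e).1], by rw [ht, (Subtype.prop e).2]⟩ }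
  have h := G.acyclic (f v) (F.mapPath p)
  rw [mapPath_length] at h
  exact h

theorem noCycleData_of_lt {V E : Type} [Preorder V] (s t : E → V)
    (hlt : ∀ e, s e < t e) : NoCycleData V E s t := by
  letI : Quiver V := ⟨fun a b => { e : E // s e = a ∧ t e = b }⟩
  have key : ∀ {a b : V} (p : Quiver.Path a b), (a = b ∧ p.length = 0) ∨ a < b := by
    intro a b p
    induction p with
    | nil => exact Or.inl ⟨rfl, rfl⟩
    | cons q f ih =>
        have hcb := hlt (Subtype.val f)
        rw [(Subtype.prop f).1, (Subtype.prop f).2] at hcb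
        rcases ih with ⟨h, _⟩ | h
        · exact Or.inr (by rw [h]; exact hcb)
        · exact Or.inr (lt_trans h hcb)
  intro v p
  rcases key p with ⟨_, h⟩ | h
  · exact h
  · exact absurd h (lt_irrefl v)

/-- The sub-causal-net spanned by a set of vertices and a set of edges. -/
noncomputable def mkSub (G : CausalNet) (Vs : Set G.V) (Es : Set G.E)
    (hs : ∀ e ∈ Es, G.src e ∈ Vs) (ht : ∀ e ∈ Es, G.tgt e ∈ Vs) : CausalNet where
  V := Vs
  E := Es
  src e := ⟨G.src e.1, hs e.1 e.2⟩
  tgt e := ⟨G.tgt e.1, ht e.1 e.2⟩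
  fintypeV := Fintype.ofFinite _
  fintypeE := Fintype.ofFinite _
  acyclic := noCycleData_of_map _ _ G Subtype.val Subtype.val (fun _ => rfl) (fun _ => rfl)

/-- The fiber of a morphism at a vertex `v` of the codomain: the sub-causal-net
of the domain on the vertices mapped to `v` and the edges mapped to the identity
path at `v`. -/
noncomputable def fiber (φ : G ⟶ H) (v : H.V) : CausalNet :=
  mkSub G {w : G.V | vmap φ w = v}
    {e : G.E | IsContractionEdge φ e ∧ vmap φ (G.src e) = v}
    (fun _ he => he.2)
    (fun e he =>
      show vmap φ (G.tgt e) = v from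
        Quiver.Path.eq_of_length_zero (edgePath φ e) he.1 ▸ he.2)

/-- The underlying undirected (simple) graph of a causal-net. -/
def undirected (G : CausalNet) : SimpleGraph G.V where
  Adj v w := v ≠ w ∧ ∃ e : G.E, (G.src e = v ∧ G.tgt e = w) ∨ (G.src e = w ∧ G.tgt e = v)
  symm := by
    constructor
    rintro v w ⟨hne, e, he⟩
    exact ⟨hne.symm, e, he.symm⟩
  loopless := by
    constructor
    intro v h
    exact h.1 rfl

/-- A causal-net is connected if its underlying undirected graph is connected. -/
def Connected (G : CausalNet) : Prop := (undirected G).Connected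

/-- A causal-Tree: a causal-net whose simplification has a tree as underlying
undirected graph.  (Since a causal-net is acyclic, the underlying undirected
graph of its simplification is exactly `undirected G`.) -/
def IsCausalTree (G : CausalNet) : Prop := (undirected G).IsTree

/-- A contraction: a vertex-coarse-graining all of whose fibers are connected. -/
def IsContractionMor (φ : G ⟶ H) : Prop :=
  IsVertexCoarseGraining φ ∧ ∀ v : H.V, Connected (fiber φ v)

/-- A simple contraction: a contraction with exactly one non-trivial fiber, that
fiber consisting of two vertices together with all edges from the first to the
second. -/
def IsSimpleContraction (φ : G ⟶ H) : Prop :=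
  IsContractionMor φ ∧
  ∃ w₁ w₂ : G.V, w₁ ≠ w₂ ∧ vmap φ w₁ = vmap φ w₂ ∧
    (∃ e : G.E, G.src e = w₁ ∧ G.tgt e = w₂) ∧
    (∀ e : G.E, IsContractionEdge φ e ↔ (G.src e = w₁ ∧ G.tgt e = w₂)) ∧
    (∀ u u' : G.V, vmap φ u = vmap φ u' →
      u = u' ∨ ((u = w₁ ∨ u = w₂) ∧ (u' = w₁ ∨ u' = w₂)))

/-- A tree-contraction: a contraction all of whose fibers are causal-Trees. -/
def IsTreeContraction (φ : G ⟶ H) : Prop :=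
  IsContractionMor φ ∧ ∀ v : H.V, IsCausalTree (fiber φ v)

/-- A directed multi-path: a causal-net whose simplification is a directed path. -/
def IsDirectedMultiPath (K : CausalNet) : Prop :=
  ∃ (a b : K.V) (p : Quiver.Path a b),
    (pathVertices p).Nodup ∧ (∀ v : K.V, v ∈ pathVertices p) ∧
    ∀ e : K.E, ∃ h ∈ pathEdges p, K.src e = K.src h ∧ K.tgt e = K.tgt h

/-- A path-contraction: a vertex-coarse-graining all of whose fibers are
directed multi-paths. -/
def IsPathContraction (φ : G ⟶ H) : Prop :=
  IsVertexCoarseGraining φ ∧ ∀ v : H.V, IsDirectedMultiPath (fiber φ v)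

/-- A point: a causal-net with exactly one vertex and no edges. -/
def IsPoint (A : CausalNet) : Prop := (∃ v : A.V, ∀ w : A.V, w = v) ∧ IsEmpty A.E

/-- Reachability: there is a directed path from `a` to `b`. -/
def Reaches (G : CausalNet) (a b : G.V) : Prop := Nonempty (Quiver.Path a b)

/-- A coclique: a set of vertices no two distinct members of which are
comparable under the reachability order. -/
def IsCoclique (G : CausalNet) (S : Set G.V) : Prop :=
  ∀ a ∈ S, ∀ b ∈ S, a ≠ b → ¬ Reaches G a b

/-- A multi-edge: the nonempty set of all edges from one fixed vertex to another. -/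
def IsMultiEdge (G : CausalNet) (s : Set G.E) : Prop :=
  s.Nonempty ∧ ∃ a b : G.V, s = {e : G.E | G.src e = a ∧ G.tgt e = b}

/-- The pair of vertices whose multi-edge is contracted by a simple contraction. -/
def ContractedPair (φ : G ⟶ H) (w₁ w₂ : G.V) : Prop :=
  w₁ ≠ w₂ ∧ vmap φ w₁ = vmap φ w₂ ∧ (∃ e : G.E, G.src e = w₁ ∧ G.tgt e = w₂) ∧
  ∀ e : G.E, IsContractionEdge φ e ↔ (G.src e = w₁ ∧ G.tgt e = w₂)

/-- Two causal-nets are isomorphic in `Cau`. -/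
def IsIsomorphicTo (A B : CausalNet) : Prop := ∃ φ : A ⟶ B, IsIso φ

/-- A simple causal-net: at most one edge between any ordered pair of vertices. -/
def IsSimpleNet (G : CausalNet) : Prop :=
  ∀ e₁ e₂ : G.E, G.src e₁ = G.src e₂ → G.tgt e₁ = G.tgt e₂ → e₁ = e₂

/-- A harmonic causal-net: every fusion out of it is an isomorphism. -/
def Harmonic (G : CausalNet) : Prop :=
  ∀ (H : CausalNet) (φ : G ⟶ H), IsFusion φ → IsIso φ

/-- A hamiltonian path: a directed path visiting every vertex exactly once. -/
def HasHamiltonianPath (G : CausalNet) : Prop :=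
  ∃ (a b : G.V) (p : Quiver.Path a b),
    (pathVertices p).Nodup ∧ ∀ v : G.V, v ∈ pathVertices p

/-- Morphisms which can be written as a composition of finitely many morphisms
each satisfying `P`. -/
inductive IsCompOf (P : ∀ ⦃A B : CausalNet⦄, (A ⟶ B) → Prop) :
    ∀ {A B : CausalNet}, (A ⟶ B) → Prop
  | of {A B : CausalNet} (φ : A ⟶ B) : P φ → IsCompOf P φ
  | comp {A B C : CausalNet} (φ : A ⟶ B) (ψ : B ⟶ C) :
      IsCompOf P φ → IsCompOf P ψ → IsCompOf P (φ ≫ ψ)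

def IsMergeTwoVertices {G H : CausalNet} (φ : G ⟶ H) : Prop :=
  IsMerging φ ∧ (∀ h : H.E, ∃! e : G.E, MapsToEdge φ e h) ∧
  ∃ w₁ w₂ : G.V, w₁ ≠ w₂ ∧ vmap φ w₁ = vmap φ w₂ ∧
    ∀ u u' : G.V, vmap φ u = vmap φ u' →
      u = u' ∨ ((u = w₁ ∨ u = w₂) ∧ (u' = w₁ ∨ u' = w₂))

def IsCoarseGrainTwoParallelEdges {G H : CausalNet} (φ : G ⟶ H) : Prop :=
  IsEdgeCoarseGraining φ ∧ Function.Bijective (vmap φ) ∧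
  ∃ e₁ e₂ : G.E, e₁ ≠ e₂ ∧ G.src e₁ = G.src e₂ ∧ G.tgt e₁ = G.tgt e₂ ∧
    (∃ h : H.E, MapsToEdge φ e₁ h ∧ MapsToEdge φ e₂ h) ∧
    ∀ (h : H.E) (d d' : G.E), MapsToEdge φ d h → MapsToEdge φ d' h →
      d = d' ∨ ((d = e₁ ∨ d = e₂) ∧ (d' = e₁ ∨ d' = e₂))

def IsContractOneEdge {G H : CausalNet} (φ : G ⟶ H) : Prop :=
  IsSimpleContraction φ ∧
  ∀ w₁ w₂ : G.V, ContractedPair φ w₁ w₂ → ∃! e : G.E, G.src e = w₁ ∧ G.tgt e = w₂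

def IsFundamentalCoarseGraining : ∀ ⦃A B : CausalNet⦄, (A ⟶ B) → Prop :=
  fun _ _ φ => IsIso φ ∨ IsMergeTwoVertices φ ∨ IsCoarseGrainTwoParallelEdges φ ∨
    IsContractOneEdge φ

section Infra

variable {G H K : CausalNet}

theorem pathEdges_nil (a : G.V) :
    pathEdges (Quiver.Path.nil : Quiver.Path a a) = [] := by simp [pathEdges]

theorem pathEdges_cons {a b c : G.V} (p : Quiver.Path a b) (f : b ⟶ c) :
    pathEdges (p.cons f) = pathEdges p ++ [homEdge f] := by simp [pathEdges]

theorem length_cast' {a b a' b' : G.V} (ha : a = a') (hb : b = b') (p : Quiver.Path a b) :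
    (p.cast ha hb).length = p.length := by subst ha; subst hb; rfl

theorem pathEdges_cast {a b a' b' : G.V} (ha : a = a') (hb : b = b') (p : Quiver.Path a b) :
    pathEdges (p.cast ha hb) = pathEdges p := by subst ha; subst hb; rfl

theorem pathEdges_comp {a b c : G.V} (p : Quiver.Path a b) (q : Quiver.Path b c) :
    pathEdges (p.comp q) = pathEdges p ++ pathEdges q := by
  induction q with
  | nil => simp [pathEdges_nil, Quiver.Path.comp]
  | cons q f ih =>
      show pathEdges ((p.comp q).cons f) = _
      rw [pathEdges_cons, pathEdges_cons, ih, List.append_assoc]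

theorem length_pathEdges {a b : G.V} (p : Quiver.Path a b) :
    (pathEdges p).length = p.length := by
  induction p with
  | nil => rw [pathEdges_nil]; rfl
  | cons p f ih => simp [pathEdges_cons, Quiver.Path.length, ih]

theorem pmap_id {a b : G.V} (p : Quiver.Path a b) : pmap (𝟙 G) p = p := rfl

theorem pmap_pmap (φ : G ⟶ H) (ψ : H ⟶ K) {a b : G.V} (p : Quiver.Path a b) :
    pmap (φ ≫ ψ) p = pmap ψ (pmap φ p) := rfl

theorem vmap_comp' (φ : G ⟶ H) (ψ : H ⟶ K) (a : G.V) :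
    vmap (φ ≫ ψ) a = vmap ψ (vmap φ a) := rfl

theorem edgePath_comp (φ : G ⟶ H) (ψ : H ⟶ K) (e : G.E) :
    edgePath (φ ≫ ψ) e = pmap ψ (edgePath φ e) := rfl

theorem pmap_nil (φ : G ⟶ H) (a : G.V) :
    pmap φ (Quiver.Path.nil : Quiver.Path a a) = Quiver.Path.nil :=
  φ.map_id a

theorem pmap_comp_path (φ : G ⟶ H) {a b c : G.V} (p : Quiver.Path a b) (q : Quiver.Path b c) :
    pmap φ (p.comp q) = (pmap φ p).comp (pmap φ q) :=
  φ.map_comp p q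

theorem pathEdges_pmap_toPath (φ : G ⟶ H) {a b : G.V} (f : a ⟶ b) :
    pathEdges (pmap φ (Quiver.Hom.toPath f)) = pathEdges (edgePath φ (homEdge f)) := by
  obtain ⟨e, h1, h2⟩ := f
  subst h1; subst h2
  rfl

theorem pathEdges_pmap (φ : G ⟶ H) {a b : G.V} (p : Quiver.Path a b) :
    pathEdges (pmap φ p) = (pathEdges p).flatMap (fun e => pathEdges (edgePath φ e)) := by
  induction p with
  | nil => rw [pmap_nil, pathEdges_nil]; simp [pathEdges_nil]
  | cons p f ih =>
      have h1 : pmap φ (p.cons f) = (pmap φ p).comp (pmap φ (Quiver.Hom.toPath f)) :=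
        φ.map_comp p (Quiver.Hom.toPath f)
      rw [h1, pathEdges_comp, ih, pathEdges_pmap_toPath, pathEdges_cons]
      simp

theorem length_pmap (φ : G ⟶ H) {a b : G.V} (p : Quiver.Path a b) :
    (pmap φ p).length = ((pathEdges p).map (fun e => (edgePath φ e).length)).sum := by
  rw [← length_pathEdges, pathEdges_pmap, List.length_flatMap]
  simp [Function.comp_def, length_pathEdges]

theorem length_pmap_zero (φ : G ⟶ H) {a b : G.V} (p : Quiver.Path a b) (hp : p.length = 0) :
    (pmap φ p).length = 0 := by
  have h : pathEdges p = [] := List.eq_nil_of_length_eq_zero (by rw [length_pathEdges, hp])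
  rw [length_pmap, h]; rfl

theorem heq_nil_of_length_zero {A B : H.V} (p : Quiver.Path A B) (hp : p.length = 0) :
    HEq p (Quiver.Path.nil : Quiver.Path A A) := by
  cases p with
  | nil => rfl
  | cons q f => simp [Quiver.Path.length] at hp

theorem heq_of_length_zero {A B A' B' : H.V} (p : Quiver.Path A B) (q : Quiver.Path A' B')
    (hA : A = A') (hp : p.length = 0) (hq : q.length = 0) : HEq p q := by
  subst hA
  exact (heq_nil_of_length_zero p hp).trans (heq_nil_of_length_zero q hq).symm

theorem heq_toPath_of_single {A B : H.V} (p : Quiver.Path A B) (h : H.E)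
    (hp : pathEdges p = [h]) :
    H.src h = A ∧ H.tgt h = B ∧ HEq p (Quiver.Hom.toPath (edgeHom H h)) := by
  cases p with
  | nil => simp [pathEdges_nil] at hp
  | cons q f =>
      rw [pathEdges_cons] at hp
      have h2 : pathEdges q = [] ∧ homEdge f = h := by
        cases hpq : pathEdges q with
        | nil => rw [hpq] at hp; simpa using hp
        | cons x l =>
            rw [hpq] at hp
            have := congrArg List.length hp
            simp at this
      obtain ⟨hq, hf⟩ := h2
      cases q with
      | nil =>
          obtain ⟨e, h1, h2⟩ := f
          cases hf
          subst h1; subst h2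
          exact ⟨rfl, rfl, HEq.rfl⟩
      | cons q g => simp [pathEdges_cons] at hq

theorem mapsToEdge_props (φ : G ⟶ H) {e : G.E} {h : H.E} (hm : MapsToEdge φ e h) :
    vmap φ (G.src e) = H.src h ∧ vmap φ (G.tgt e) = H.tgt h ∧ (edgePath φ e).length = 1 := by
  obtain ⟨h1, h2, _⟩ := heq_toPath_of_single _ h hm
  exact ⟨h1.symm, h2.symm, by rw [← length_pathEdges, hm]; rfl⟩

theorem heq_pmap (φ : G ⟶ H) {a b a' b' : G.V} (p : Quiver.Path a b) (p' : Quiver.Path a' b')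
    (ha : a = a') (hb : b = b') (hp : HEq p p') : HEq (pmap φ p) (pmap φ p') := by
  subst ha; subst hb
  rw [eq_of_heq hp]

theorem conj_of_heq {C : Type*} [Category C] {A B A' B' : C} (hA : A = A') (hB : B = B')
    (f : A ⟶ B) (g : A' ⟶ B') (h : HEq f g) : f = eqToHom hA ≫ g ≫ eqToHom hB.symm := by
  subst hA; subst hB
  rw [eq_of_heq h]; simp

theorem hom_ext {φ ψ : G ⟶ H} (hobj : ∀ a, vmap φ a = vmap ψ a)
    (hmap : ∀ {a b : G.V} (f : a ⟶ b),
      HEq (pmap φ (Quiver.Hom.toPath f)) (pmap ψ (Quiver.Hom.toPath f))) :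
    φ = ψ := by
  refine CategoryTheory.Functor.ext (fun a => show φ.obj a = ψ.obj a from hobj a) ?_
  intro a b (p : @Quiver.Path G.V (CausalNet.quiver G) a b)
  induction p with
  | nil =>
      have e0 : φ.map (@Quiver.Path.nil G.V (CausalNet.quiver G) a) = 𝟙 (φ.obj a) := φ.map_id a
      have e0' : ψ.map (@Quiver.Path.nil G.V (CausalNet.quiver G) a) = 𝟙 (ψ.obj a) := ψ.map_id a
      erw [e0, e0']
      simp
  | cons p f ih =>
      have e1 : φ.map (@Quiver.Path.cons G.V (CausalNet.quiver G) _ _ _ p f)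
          = φ.map p ≫ φ.map (Quiver.Hom.toPath f) :=
        φ.map_comp p (Quiver.Hom.toPath f)
      have e2 : ψ.map (@Quiver.Path.cons G.V (CausalNet.quiver G) _ _ _ p f)
          = ψ.map p ≫ ψ.map (Quiver.Hom.toPath f) :=
        ψ.map_comp p (Quiver.Hom.toPath f)
      erw [e1, e2, ih,
        conj_of_heq (C := Paths H.V) (show φ.obj _ = ψ.obj _ from hobj _) (show φ.obj _ = ψ.obj _ from hobj _) (φ.map (Quiver.Hom.toPath f))
          (ψ.map (Quiver.Hom.toPath f)) (hmap f)]
      simp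

end Infra
section MkHom

variable {G H K : CausalNet}

def mapAux (fv : G.V → H.V) (fe : ∀ e : G.E, Quiver.Path (fv (G.src e)) (fv (G.tgt e))) :
    ∀ {a b : G.V}, Quiver.Path a b → Quiver.Path (fv a) (fv b)
  | _, _, Quiver.Path.nil => Quiver.Path.nil
  | _, _, Quiver.Path.cons p f =>
      (mapAux fv fe p).comp ((fe (homEdge f)).cast (congrArg fv f.2.1) (congrArg fv f.2.2))

theorem mapAux_comp (fv : G.V → H.V) (fe : ∀ e : G.E, Quiver.Path (fv (G.src e)) (fv (G.tgt e)))
    {a b c : G.V} (p : Quiver.Path a b) (q : Quiver.Path b c) :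
    mapAux fv fe (p.comp q) = (mapAux fv fe p).comp (mapAux fv fe q) := by
  induction q with
  | nil => simp [Quiver.Path.comp, mapAux]
  | cons q f ih =>
      show mapAux fv fe ((p.comp q).cons f) = _
      simp only [mapAux, ih]
      exact Quiver.Path.comp_assoc _ _ _

def mkHom (fv : G.V → H.V) (fe : ∀ e : G.E, Quiver.Path (fv (G.src e)) (fv (G.tgt e))) :
    G ⟶ H where
  obj := fv
  map := mapAux fv fe
  map_id a := by
    show mapAux fv fe Quiver.Path.nil = Quiver.Path.nil
    exact mapAux.eq_1 fv fe a
  map_comp p q := mapAux_comp fv fe p q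

theorem vmap_mkHom (fv : G.V → H.V) (fe : ∀ e, Quiver.Path (fv (G.src e)) (fv (G.tgt e)))
    (a : G.V) : vmap (mkHom fv fe) a = fv a := rfl

theorem edgePath_mkHom (fv : G.V → H.V) (fe : ∀ e, Quiver.Path (fv (G.src e)) (fv (G.tgt e)))
    (e : G.E) : edgePath (mkHom fv fe) e = fe e := by
  show mapAux fv fe (Quiver.Hom.toPath (edgeHom G e)) = fe e
  rw [show Quiver.Hom.toPath (edgeHom G e) = Quiver.Path.nil.cons (edgeHom G e) from rfl]
  simp only [mapAux, Quiver.Path.cast_rfl_rfl]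
  exact Quiver.Path.nil_comp _

theorem pmap_mkHom_toPath (fv : G.V → H.V) (fe : ∀ e, Quiver.Path (fv (G.src e)) (fv (G.tgt e)))
    {a b : G.V} (f : a ⟶ b) :
    HEq (pmap (mkHom fv fe) (Quiver.Hom.toPath f)) (fe (homEdge f)) := by
  obtain ⟨e, h1, h2⟩ := f
  subst h1; subst h2
  rw [show pmap (mkHom fv fe) (Quiver.Hom.toPath ⟨e, rfl, rfl⟩) = fe e from edgePath_mkHom fv fe e]
  exact HEq.rfl

end MkHom

section Acyclic

variable {G H : CausalNet}

theorem length_zero_of_endpoints_eq {a b : G.V} (p : Quiver.Path a b) (h : a = b) :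
    p.length = 0 := by
  subst h
  exact G.acyclic a p

theorem no_loop (e : G.E) : G.src e ≠ G.tgt e := by
  intro h
  have h0 := length_zero_of_endpoints_eq (Quiver.Hom.toPath (edgeHom G e)) h
  simp [Quiver.Hom.toPath, Quiver.Path.length] at h0

theorem reaches_refl (a : G.V) : Reaches G a a := ⟨Quiver.Path.nil⟩

theorem reaches_trans {a b c : G.V} : Reaches G a b → Reaches G b c → Reaches G a c :=
  fun ⟨p⟩ ⟨q⟩ => ⟨p.comp q⟩

theorem reaches_of_edge (e : G.E) : Reaches G (G.src e) (G.tgt e) :=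
  ⟨Quiver.Hom.toPath (edgeHom G e)⟩

theorem not_reaches_of_pos {a b : G.V} (p : Quiver.Path a b) (hp : p.length ≠ 0) :
    ¬ Reaches G b a := by
  rintro ⟨q⟩
  have h0 := length_zero_of_endpoints_eq (p.comp q) rfl
  rw [Quiver.Path.length_comp] at h0
  omega

open Classical in
noncomputable def rho (G : CausalNet) (v : G.V) : ℕ :=
  (Finset.univ.filter (fun u => Reaches G u v)).card

open Classical in
theorem rho_mono {a b : G.V} (h : Reaches G a b) : rho G a ≤ rho G b := by
  classical
  apply Finset.card_le_card
  intro u hu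
  simp only [Finset.mem_filter, Finset.mem_univ, true_and] at *
  exact reaches_trans (by convert hu) (by convert h)

open Classical in
theorem rho_strict {a b : G.V} (p : Quiver.Path a b) (hp : p.length ≠ 0) :
    rho G a < rho G b := by
  classical
  apply Finset.card_lt_card
  constructor
  · intro u hu
    simp only [Finset.mem_filter, Finset.mem_univ, true_and] at *
    exact reaches_trans (by convert hu) ⟨p⟩
  · intro hsub
    have hb : b ∈ Finset.univ.filter (fun u => Reaches G u b) := by
      simp [reaches_refl]
    have := hsub hb
    simp only [Finset.mem_filter, Finset.mem_univ, true_and] at this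
    exact not_reaches_of_pos p hp (by convert this)

end Acyclic
section Backward

variable {G H K : CausalNet}

theorem list_length_le_sum : ∀ l : List ℕ, (∀ x ∈ l, 1 ≤ x) → l.length ≤ l.sum := by
  intro l
  induction l with
  | nil => simp
  | cons x l ih =>
      intro h
      have h1 := h x (by simp)
      have h2 := ih (fun y hy => h y (by simp [hy]))
      simp only [List.length_cons, List.sum_cons]
      omega

theorem list_length_le_sum_map {α : Type} (l : List α) (f : α → ℕ)
    (h : ∀ x ∈ l, 1 ≤ f x) : l.length ≤ (l.map f).sum := by
  have h2 := list_length_le_sum (l.map f) (by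
    intro x hx
    simp only [List.mem_map] at hx
    obtain ⟨a, ha, rfl⟩ := hx
    exact h a ha)
  simpa using h2

theorem edgePath_id_pathEdges (χ : G ⟶ G) (hχ : χ = 𝟙 G) (e : G.E) :
    pathEdges (edgePath χ e) = [e] ∧ (edgePath χ e).length = 1 := by
  subst hχ
  rw [show edgePath (𝟙 G) e = Quiver.Hom.toPath (edgeHom G e) from rfl]
  rw [show Quiver.Hom.toPath (edgeHom G e) = Quiver.Path.nil.cons (edgeHom G e) from rfl]
  erw [pathEdges_cons, pathEdges_nil]
  exact ⟨rfl, rfl⟩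

theorem vmap_id_eq (χ : G ⟶ G) (hχ : χ = 𝟙 G) (v : G.V) : vmap χ v = v := by
  subst hχ; rfl

theorem coarse_comp {φ : G ⟶ H} {ψ : H ⟶ K} (hφ : IsCoarseGraining φ)
    (hψ : IsCoarseGraining ψ) : IsCoarseGraining (φ ≫ ψ) := by
  obtain ⟨⟨hv1, he1⟩, hs1⟩ := hφ
  obtain ⟨⟨hv2, he2⟩, hs2⟩ := hψ
  refine ⟨⟨?_, ?_⟩, ?_⟩
  · intro v
    obtain ⟨w, hw⟩ := hv2 v
    obtain ⟨u, hu⟩ := hv1 w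
    exact ⟨u, by rw [vmap_comp', hu, hw]⟩
  · intro k
    obtain ⟨h, hh⟩ := he2 k
    obtain ⟨e, he⟩ := he1 h
    refine ⟨e, ?_⟩
    unfold MapsToEdge at *
    erw [edgePath_comp, pathEdges_pmap, he]
    simp [hh]
  · intro e hsub
    unfold IsSubdivisionEdge at hsub
    erw [edgePath_comp, length_pmap] at hsub
    have hle : (edgePath φ e).length ≤ 1 := by
      have := hs1 e
      unfold IsSubdivisionEdge at this
      omega
    interval_cases h : (edgePath φ e).length
    · have : pathEdges (edgePath φ e) = [] :=
        List.eq_nil_of_length_eq_zero (by rw [length_pathEdges, h])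
      rw [this] at hsub
      simp at hsub
    · have : (pathEdges (edgePath φ e)).length = 1 := by rw [length_pathEdges, h]
      obtain ⟨d, hd⟩ := List.length_eq_one_iff.1 this
      rw [hd] at hsub
      have := hs2 d
      unfold IsSubdivisionEdge at this
      simp at hsub
      omega

theorem isIso_coarse {φ : G ⟶ H} (hiso : IsIso φ) : IsCoarseGraining φ := by
  obtain ⟨ψ, hφψ, hψφ⟩ := hiso.out
  have keyG : ∀ e : G.E, pathEdges (pmap ψ (edgePath φ e)) = [e] ∧
      (pmap ψ (edgePath φ e)).length = 1 := by
    intro e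
    rw [← edgePath_comp]
    exact edgePath_id_pathEdges _ hφψ e
  have keyH : ∀ h : H.E, pathEdges (pmap φ (edgePath ψ h)) = [h] ∧
      (pmap φ (edgePath ψ h)).length = 1 := by
    intro h
    rw [← edgePath_comp]
    exact edgePath_id_pathEdges _ hψφ h
  have hnocontrφ : ∀ e : G.E, (edgePath φ e).length ≠ 0 := by
    intro e h0
    have := (keyG e).2
    rw [length_pmap_zero ψ _ h0] at this
    exact absurd this (by omega)
  have hnocontrψ : ∀ h : H.E, (edgePath ψ h).length ≠ 0 := by
    intro h h0
    have := (keyH h).2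
    rw [length_pmap_zero φ _ h0] at this
    exact absurd this (by omega)
  refine ⟨⟨?_, ?_⟩, ?_⟩
  · intro v
    exact ⟨vmap ψ v, by rw [← vmap_comp']; exact vmap_id_eq _ hψφ v⟩
  · intro h
    have h1 := (keyH h).1
    have h2 := (keyH h).2
    rw [length_pmap] at h2
    have hlen : (pathEdges (edgePath ψ h)).length ≤ 1 := by
      refine le_trans (list_length_le_sum_map _ _ ?_) (le_of_eq h2)
      intro d _
      have := hnocontrφ d
      omega
    rw [pathEdges_pmap] at h1
    rcases hl : pathEdges (edgePath ψ h) with _ | ⟨d, l⟩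
    · rw [hl] at h1; simp at h1
    · have : l = [] := by
        rw [hl] at hlen; simpa using hlen
      subst this
      rw [hl] at h1
      simp at h1
      exact ⟨d, h1⟩
  · intro e hsub
    unfold IsSubdivisionEdge at hsub
    have h2 := (keyG e).2
    rw [length_pmap] at h2
    have hthis : (pathEdges (edgePath φ e)).length ≤
        ((pathEdges (edgePath φ e)).map (fun h => (edgePath ψ h).length)).sum := by
      refine list_length_le_sum_map _ _ ?_
      intro d _
      have := hnocontrψ d
      omega
    rw [length_pathEdges] at hthis
    omega

theorem fundamental_coarse {φ : G ⟶ H} (h : IsFundamentalCoarseGraining φ) :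
    IsCoarseGraining φ := by
  rcases h with h | h | h | h
  · exact isIso_coarse h
  · exact h.1.1.1
  · exact h.1.1
  · exact h.1.1.1.1

theorem compOf_coarse {φ : G ⟶ H} (h : IsCompOf IsFundamentalCoarseGraining φ) :
    IsCoarseGraining φ := by
  induction h with
  | of φ hφ => exact fundamental_coarse hφ
  | comp φ ψ h1 h2 ih1 ih2 => exact coarse_comp ih1 ih2

end Backward
section ForwardHelpers

variable {G H K : CausalNet}

theorem pathEdges_toPath {a b : G.V} (f : a ⟶ b) :
    pathEdges (Quiver.Hom.toPath f) = [homEdge f] := by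
  rw [show Quiver.Hom.toPath f = Quiver.Path.nil.cons f from rfl, pathEdges_cons, pathEdges_nil]
  rfl

theorem length_toPath {a b : G.V} (f : a ⟶ b) : (Quiver.Hom.toPath f).length = 1 := rfl

theorem pmap_cast (φ : G ⟶ H) {a b a' b' : G.V} (ha : a = a') (hb : b = b')
    (p : Quiver.Path a b) :
    pmap φ (p.cast ha hb) = (pmap φ p).cast (congrArg (vmap φ) ha) (congrArg (vmap φ) hb) := by
  subst ha; subst hb; rfl

theorem pathEdges_heq {a b a' b' : G.V} (p : Quiver.Path a b) (q : Quiver.Path a' b')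
    (ha : a = a') (hb : b = b') (h : HEq p q) : pathEdges p = pathEdges q := by
  subst ha; subst hb
  rw [eq_of_heq h]

theorem length_heq {a b a' b' : G.V} (p : Quiver.Path a b) (q : Quiver.Path a' b')
    (ha : a = a') (hb : b = b') (h : HEq p q) : p.length = q.length := by
  subst ha; subst hb
  rw [eq_of_heq h]

theorem nat_card_subtype_lt {α : Type} [Fintype α] (p : α → Prop) (x : α) (hx : ¬ p x) :
    Nat.card {a // p a} < Nat.card α := by
  classical
  have h := Fintype.card_subtype_lt (p := p) hx
  rwa [← Nat.card_eq_fintype_card, ← Nat.card_eq_fintype_card] at h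

/-- Two parallel edges with identified images. -/
def DupEdges (φ : G ⟶ H) : Prop :=
  ∃ e₁ e₂ : G.E, e₁ ≠ e₂ ∧ G.src e₁ = G.src e₂ ∧ G.tgt e₁ = G.tgt e₂ ∧
    HEq (edgePath φ e₁) (edgePath φ e₂)

theorem coarse_length_le {φ : G ⟶ H} (hc : IsCoarseGraining φ) (e : G.E) :
    (edgePath φ e).length ≤ 1 := by
  have := hc.2 e
  unfold IsSubdivisionEdge at this
  omega

theorem segment_exists {φ : G ⟶ H} (hc : IsCoarseGraining φ) (e : G.E)
    (hnc : (edgePath φ e).length ≠ 0) : ∃ h : H.E, MapsToEdge φ e h := by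
  have h1 : (edgePath φ e).length = 1 := by have := coarse_length_le hc e; omega
  have h2 : (pathEdges (edgePath φ e)).length = 1 := by rw [length_pathEdges, h1]
  obtain ⟨h, hh⟩ := List.length_eq_one_iff.1 h2
  exact ⟨h, hh⟩

theorem contraction_of_same_image {φ : G ⟶ H} (hc : IsCoarseGraining φ) (d : G.E)
    (hsame : vmap φ (G.src d) = vmap φ (G.tgt d)) : IsContractionEdge φ d := by
  by_contra h0
  obtain ⟨h, hh⟩ := segment_exists hc d h0
  obtain ⟨h1, h2, _⟩ := mapsToEdge_props φ hh
  exact no_loop h (h1.symm.trans (hsame.trans h2))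

theorem mapsToEdge_not_contraction {φ : G ⟶ H} {e : G.E} {h : H.E} (hm : MapsToEdge φ e h) :
    ¬ IsContractionEdge φ e := by
  intro h0
  have := (mapsToEdge_props φ hm).2.2
  unfold IsContractionEdge at h0
  omega

end ForwardHelpers

section CaseA

variable {G H : CausalNet}

/-- Deleting one edge from a causal-net. -/
noncomputable def delNet (G : CausalNet) (e₂ : G.E) : CausalNet where
  V := G.V
  E := {d : G.E // d ≠ e₂}
  src d := G.src d.val
  tgt d := G.tgt d.val
  fintypeV := G.fintypeV
  fintypeE := Fintype.ofFinite _
  acyclic := noCycleData_of_map _ _ G id Subtype.val (fun _ => rfl) (fun _ => rfl)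

open Classical in
noncomputable def delFe (G : CausalNet) (e₁ e₂ : G.E) (hne : e₁ ≠ e₂)
    (hsrc : G.src e₁ = G.src e₂) (htgt : G.tgt e₁ = G.tgt e₂) (d : G.E) :
    @Quiver.Path (delNet G e₂).V (CausalNet.quiver (delNet G e₂)) (G.src d) (G.tgt d) :=
  if hd2 : d = e₂ then
    @Quiver.Path.cast (delNet G e₂).V (CausalNet.quiver (delNet G e₂)) _ _ _ _
      (show G.src e₁ = G.src d by rw [hd2]; exact hsrc)
      (show G.tgt e₁ = G.tgt d by rw [hd2]; exact htgt)
      (Quiver.Hom.toPath (edgeHom (delNet G e₂) ⟨e₁, hne⟩))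
  else Quiver.Hom.toPath (edgeHom (delNet G e₂) ⟨d, hd2⟩)

noncomputable def delMu (G : CausalNet) (e₁ e₂ : G.E) (hne : e₁ ≠ e₂)
    (hsrc : G.src e₁ = G.src e₂) (htgt : G.tgt e₁ = G.tgt e₂) : G ⟶ delNet G e₂ :=
  mkHom (id : G.V → (delNet G e₂).V) (delFe G e₁ e₂ hne hsrc htgt)

noncomputable def delPhi (φ : G ⟶ H) (e₂ : G.E) : delNet G e₂ ⟶ H :=
  mkHom (G := delNet G e₂) (vmap (G := G) φ) (fun d => edgePath φ d.val)

theorem caseA {φ : G ⟶ H} (hc : IsCoarseGraining φ) (hd : DupEdges φ) :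
    ∃ (G' : CausalNet) (μ : G ⟶ G') (φ' : G' ⟶ H),
      IsCoarseGrainTwoParallelEdges μ ∧ IsCoarseGraining φ' ∧ φ = μ ≫ φ' ∧
      Nat.card G'.V + Nat.card G'.E < Nat.card G.V + Nat.card G.E := by
  classical
  obtain ⟨e₁, e₂, hne, hsrc, htgt, hheq⟩ := hd
  refine ⟨delNet G e₂, delMu G e₁ e₂ hne hsrc htgt, delPhi φ e₂, ?_, ?_, ?_, ?_⟩
  · -- IsCoarseGrainTwoParallelEdges
    have hedge : ∀ d : G.E, edgePath (delMu G e₁ e₂ hne hsrc htgt) d =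
        delFe G e₁ e₂ hne hsrc htgt d := fun d => edgePath_mkHom _ _ d
    have hlen : ∀ d : G.E, (edgePath (delMu G e₁ e₂ hne hsrc htgt) d).length = 1 := by
      intro d
      rw [hedge d]
      unfold delFe
      split
      · erw [length_cast']; rfl
      · rfl
    have hchar : ∀ (d : G.E) (h : (delNet G e₂).E),
        MapsToEdge (delMu G e₁ e₂ hne hsrc htgt) d h →
        (d = e₂ ∧ h = ⟨e₁, hne⟩) ∨ h.val = d := by
      intro d h hm
      unfold MapsToEdge at hm
      rw [hedge d] at hm
      unfold delFe at hm
      split at hm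
      · erw [pathEdges_cast, pathEdges_toPath] at hm
        simp only [List.cons.injEq, and_true] at hm
        exact Or.inl ⟨by assumption, by rw [← hm]; rfl⟩
      · erw [pathEdges_toPath] at hm
        simp only [List.cons.injEq, and_true] at hm
        exact Or.inr (by rw [← hm]; rfl)
    have hmaps : ∀ (d : G.E) (hd2 : d ≠ e₂),
        MapsToEdge (delMu G e₁ e₂ hne hsrc htgt) d ⟨d, hd2⟩ := by
      intro d hd2
      unfold MapsToEdge
      rw [hedge d]
      unfold delFe
      erw [dif_neg hd2, pathEdges_toPath]
      rfl
    have hmaps2 : MapsToEdge (delMu G e₁ e₂ hne hsrc htgt) e₂ ⟨e₁, hne⟩ := by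
      unfold MapsToEdge
      rw [hedge e₂]
      unfold delFe
      erw [dif_pos rfl, pathEdges_cast, pathEdges_toPath]
      rfl
    refine ⟨⟨⟨⟨?_, ?_⟩, ?_⟩, ?_, ?_⟩, ?_, e₁, e₂, hne, hsrc, htgt,
      ⟨⟨e₁, hne⟩, hmaps e₁ hne, hmaps2⟩, ?_⟩
    · exact fun v => ⟨v, rfl⟩
    · intro h
      exact ⟨h.val, by have := hmaps h.val h.2; erw [Subtype.coe_eta] at this; exact this⟩
    · intro d hsub
      unfold IsSubdivisionEdge at hsub
      rw [hlen d] at hsub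
      omega
    · exact fun a b hab => hab
    · intro d hcontr
      unfold IsContractionEdge at hcontr
      rw [hlen d] at hcontr
      omega
    · exact Function.bijective_id
    · intro h d d' hmd hmd'
      rcases hchar d h hmd with ⟨hd2, hh⟩ | hv
      · rcases hchar d' h hmd' with ⟨hd2', hh'⟩ | hv'
        · exact Or.inl (hd2.trans hd2'.symm)
        · refine Or.inr ⟨Or.inr hd2, Or.inl ?_⟩
          rw [← hv', hh]
      · rcases hchar d' h hmd' with ⟨hd2', hh'⟩ | hv'
        · refine Or.inr ⟨Or.inl ?_, Or.inr hd2'⟩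
          rw [← hv, hh']
        · exact Or.inl (hv.symm.trans hv')
  · -- φ' coarse
    have hedge : ∀ d : (delNet G e₂).E, edgePath (delPhi φ e₂) d = edgePath φ d.val :=
      fun d => edgePath_mkHom _ _ d
    refine ⟨⟨?_, ?_⟩, ?_⟩
    · intro v
      obtain ⟨w, hw⟩ := hc.1.1 v
      exact ⟨w, hw⟩
    · intro h
      obtain ⟨e₀, he₀⟩ := hc.1.2 h
      by_cases h2 : e₀ = e₂
      · subst h2
        refine ⟨⟨e₁, hne⟩, ?_⟩
        unfold MapsToEdge at *
        erw [hedge]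
        show pathEdges (edgePath φ e₁) = [h]
        rw [pathEdges_heq (edgePath φ e₁) (edgePath φ e₀) (congrArg (vmap φ) hsrc) (congrArg (vmap φ) htgt) hheq]
        exact he₀
      · exact ⟨⟨e₀, h2⟩, by unfold MapsToEdge at *; erw [hedge]; exact he₀⟩
    · intro d hsub
      unfold IsSubdivisionEdge at hsub
      rw [hedge] at hsub
      exact hc.2 d.val hsub
  · -- factorization
    refine hom_ext ?_ ?_
    · intro a; rfl
    · intro a b f
      obtain ⟨d, h1, h2⟩ := f
      subst h1; subst h2
      refine HEq.symm ?_
      show HEq (pmap (delPhi φ e₂) (pmap (delMu G e₁ e₂ hne hsrc htgt)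
        (Quiver.Hom.toPath (edgeHom G d)))) (edgePath φ d)
      have h3 : pmap (delMu G e₁ e₂ hne hsrc htgt) (Quiver.Hom.toPath (edgeHom G d)) =
          edgePath (delMu G e₁ e₂ hne hsrc htgt) d := rfl
      rw [h3, show edgePath (delMu G e₁ e₂ hne hsrc htgt) d =
        delFe G e₁ e₂ hne hsrc htgt d from edgePath_mkHom _ _ d]
      unfold delFe
      by_cases hd2 : d = e₂
      · subst hd2
        erw [dif_pos rfl, pmap_cast]
        refine HEq.trans (Quiver.Path.cast_heq _ _ _) ?_
        have h4 : pmap (delPhi φ d) (Quiver.Hom.toPath (edgeHom (delNet G d) ⟨e₁, hne⟩)) =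
            edgePath φ e₁ := edgePath_mkHom _ _ _
        erw [h4]
        exact hheq
      · rw [dif_neg hd2]
        have h4 : pmap (delPhi φ e₂) (Quiver.Hom.toPath (edgeHom (delNet G e₂) ⟨d, hd2⟩)) =
            edgePath φ d := edgePath_mkHom _ _ _
        erw [h4]; exact HEq.rfl
  · -- measure
    have h1 : Nat.card (delNet G e₂).V = Nat.card G.V := rfl
    have h2 : Nat.card (delNet G e₂).E < Nat.card G.E :=
      nat_card_subtype_lt _ e₂ (by simp)
    omega

end CaseA
section CaseC

variable {G H : CausalNet}

open Classical in
noncomputable def mergeProj (G : CausalNet) (w₁ w₂ : G.V) (hne : w₁ ≠ w₂) :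
    G.V → {v : G.V // v ≠ w₂} := fun v => if h : v = w₂ then ⟨w₁, hne⟩ else ⟨v, h⟩

theorem mergeProj_fix (w₁ w₂ : G.V) (hne : w₁ ≠ w₂) (v' : {v : G.V // v ≠ w₂}) :
    mergeProj G w₁ w₂ hne v'.val = v' := by
  unfold mergeProj
  rw [dif_neg v'.2]

theorem mergeProj_w₁ (w₁ w₂ : G.V) (hne : w₁ ≠ w₂) :
    mergeProj G w₁ w₂ hne w₁ = ⟨w₁, hne⟩ := by
  unfold mergeProj
  rw [dif_neg hne]

theorem mergeProj_w₂ (w₁ w₂ : G.V) (hne : w₁ ≠ w₂) :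
    mergeProj G w₁ w₂ hne w₂ = ⟨w₁, hne⟩ := by
  unfold mergeProj
  rw [dif_pos rfl]

theorem mergeProj_cases (w₁ w₂ : G.V) (hne : w₁ ≠ w₂) (u u' : G.V)
    (h : mergeProj G w₁ w₂ hne u = mergeProj G w₁ w₂ hne u') :
    u = u' ∨ ((u = w₁ ∨ u = w₂) ∧ (u' = w₁ ∨ u' = w₂)) := by
  unfold mergeProj at h
  by_cases h1 : u = w₂ <;> by_cases h2 : u' = w₂
  · exact Or.inl (h1.trans h2.symm)
  · rw [dif_pos h1, dif_neg h2] at h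
    have := congrArg Subtype.val h
    exact Or.inr ⟨Or.inr h1, Or.inl this.symm⟩
  · rw [dif_neg h1, dif_pos h2] at h
    have := congrArg Subtype.val h
    exact Or.inr ⟨Or.inl this, Or.inr h2⟩
  · rw [dif_neg h1, dif_neg h2] at h
    exact Or.inl (congrArg Subtype.val h)

theorem mergeProj_key {φ : G ⟶ H} (w₁ w₂ : G.V) (hne : w₁ ≠ w₂)
    (hww : vmap φ w₁ = vmap φ w₂) (v : G.V) :
    vmap φ ((mergeProj G w₁ w₂ hne v).val) = vmap φ v := by
  unfold mergeProj
  by_cases h : v = w₂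
  · rw [dif_pos h, h]
    exact hww
  · rw [dif_neg h]

noncomputable def mergeNet (G : CausalNet) (w₁ w₂ : G.V) (hne : w₁ ≠ w₂)
    (hacyc : NoCycleData {v : G.V // v ≠ w₂} G.E
      (fun e => mergeProj G w₁ w₂ hne (G.src e))
      (fun e => mergeProj G w₁ w₂ hne (G.tgt e))) : CausalNet where
  V := {v : G.V // v ≠ w₂}
  E := G.E
  src e := mergeProj G w₁ w₂ hne (G.src e)
  tgt e := mergeProj G w₁ w₂ hne (G.tgt e)
  fintypeV := Fintype.ofFinite _
  fintypeE := G.fintypeE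
  acyclic := hacyc

theorem merge_acyclic {φ : G ⟶ H} (hc : IsCoarseGraining φ)
    (hnc : ∀ e, ¬ IsContractionEdge φ e) (w₁ w₂ : G.V) (hne : w₁ ≠ w₂)
    (hww : vmap φ w₁ = vmap φ w₂) :
    NoCycleData {v : G.V // v ≠ w₂} G.E
      (fun e => mergeProj G w₁ w₂ hne (G.src e))
      (fun e => mergeProj G w₁ w₂ hne (G.tgt e)) := by
  classical
  have hseg : ∀ e : G.E, ∃ h, MapsToEdge φ e h := fun e => segment_exists hc e (hnc e)
  choose em hem using hseg
  refine noCycleData_of_map _ _ H (fun v' => vmap φ v'.val) em ?_ ?_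
  · intro e
    show H.src (em e) = vmap φ (mergeProj G w₁ w₂ hne (G.src e)).val
    rw [mergeProj_key w₁ w₂ hne hww (G.src e)]
    exact ((mapsToEdge_props φ (hem e)).1).symm
  · intro e
    show H.tgt (em e) = vmap φ (mergeProj G w₁ w₂ hne (G.tgt e)).val
    rw [mergeProj_key w₁ w₂ hne hww (G.tgt e)]
    exact ((mapsToEdge_props φ (hem e)).2.1).symm

noncomputable def mergeMu (G : CausalNet) (w₁ w₂ : G.V) (hne : w₁ ≠ w₂)
    (hacyc : NoCycleData {v : G.V // v ≠ w₂} G.E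
      (fun e => mergeProj G w₁ w₂ hne (G.src e))
      (fun e => mergeProj G w₁ w₂ hne (G.tgt e))) :
    G ⟶ mergeNet G w₁ w₂ hne hacyc :=
  mkHom (mergeProj G w₁ w₂ hne)
    (fun e => Quiver.Hom.toPath (edgeHom (mergeNet G w₁ w₂ hne hacyc) e))

noncomputable def mergePhi (φ : G ⟶ H) (w₁ w₂ : G.V) (hne : w₁ ≠ w₂)
    (hacyc : NoCycleData {v : G.V // v ≠ w₂} G.E
      (fun e => mergeProj G w₁ w₂ hne (G.src e))
      (fun e => mergeProj G w₁ w₂ hne (G.tgt e)))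
    (hww : vmap φ w₁ = vmap φ w₂) : mergeNet G w₁ w₂ hne hacyc ⟶ H :=
  mkHom (G := mergeNet G w₁ w₂ hne hacyc) (fun v' => vmap φ v'.val)
    (fun e => (edgePath φ e).cast
      (mergeProj_key w₁ w₂ hne hww (G.src e)).symm
      (mergeProj_key w₁ w₂ hne hww (G.tgt e)).symm)

theorem caseC {φ : G ⟶ H} (hc : IsCoarseGraining φ)
    (hnc : ∀ e, ¬ IsContractionEdge φ e) (w₁ w₂ : G.V) (hne : w₁ ≠ w₂)
    (hww : vmap φ w₁ = vmap φ w₂) :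
    ∃ (G' : CausalNet) (μ : G ⟶ G') (φ' : G' ⟶ H),
      IsMergeTwoVertices μ ∧ IsCoarseGraining φ' ∧ φ = μ ≫ φ' ∧
      Nat.card G'.V + Nat.card G'.E < Nat.card G.V + Nat.card G.E := by
  classical
  have hacyc := merge_acyclic hc hnc w₁ w₂ hne hww
  refine ⟨mergeNet G w₁ w₂ hne hacyc, mergeMu G w₁ w₂ hne hacyc,
    mergePhi φ w₁ w₂ hne hacyc hww, ?_, ?_, ?_, ?_⟩
  · -- IsMergeTwoVertices
    have hedge : ∀ e : G.E, edgePath (mergeMu G w₁ w₂ hne hacyc) e =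
        Quiver.Hom.toPath (edgeHom (mergeNet G w₁ w₂ hne hacyc) e) :=
      fun e => edgePath_mkHom _ _ e
    have hmaps : ∀ e : G.E, MapsToEdge (mergeMu G w₁ w₂ hne hacyc) e e := by
      intro e
      unfold MapsToEdge
      erw [hedge e, pathEdges_toPath]
      rfl
    have hchar : ∀ (e : G.E) (h : (mergeNet G w₁ w₂ hne hacyc).E),
        MapsToEdge (mergeMu G w₁ w₂ hne hacyc) e h → h = e := by
      intro e h hm
      unfold MapsToEdge at hm
      erw [hedge e, pathEdges_toPath] at hm
      simp only [List.cons.injEq, and_true] at hm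
      rw [← hm]
      rfl
    refine ⟨⟨⟨⟨⟨?_, ?_⟩, ?_⟩, ?_⟩, ?_⟩, ?_, w₁, w₂, hne, ?_, ?_⟩
    · intro v'
      exact ⟨v'.val, by
        rw [show vmap (mergeMu G w₁ w₂ hne hacyc) v'.val = mergeProj G w₁ w₂ hne v'.val
          from rfl]
        exact mergeProj_fix w₁ w₂ hne v'⟩
    · exact fun h => ⟨h, hmaps h⟩
    · intro e hsub
      unfold IsSubdivisionEdge at hsub
      erw [hedge e, length_toPath] at hsub
      omega
    · intro h e₁ e₂ hm1 hm2
      exact (hchar e₁ h hm1).symm.trans (hchar e₂ h hm2)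
    · intro e hcontr
      unfold IsContractionEdge at hcontr
      erw [hedge e, length_toPath] at hcontr
      omega
    · intro h
      exact ⟨h, hmaps h, fun e he => (hchar e h he) ▸ rfl⟩
    · show mergeProj G w₁ w₂ hne w₁ = mergeProj G w₁ w₂ hne w₂
      rw [mergeProj_w₁, mergeProj_w₂]
    · intro u u' huu
      exact mergeProj_cases w₁ w₂ hne u u' huu
  · -- φ' coarse
    have hedge : ∀ e : G.E, edgePath (mergePhi φ w₁ w₂ hne hacyc hww) e =
        (edgePath φ e).cast
          (mergeProj_key w₁ w₂ hne hww (G.src e)).symm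
          (mergeProj_key w₁ w₂ hne hww (G.tgt e)).symm :=
      fun e => by unfold mergePhi; apply edgePath_mkHom
    refine ⟨⟨?_, ?_⟩, ?_⟩
    · intro v
      obtain ⟨w, hw2⟩ := hc.1.1 v
      refine ⟨mergeProj G w₁ w₂ hne w, ?_⟩
      show vmap φ ((mergeProj G w₁ w₂ hne w).val) = v
      rw [mergeProj_key w₁ w₂ hne hww w]
      exact hw2
    · intro h
      obtain ⟨e₀, he₀⟩ := hc.1.2 h
      refine ⟨e₀, ?_⟩
      unfold MapsToEdge at *
      erw [hedge e₀, pathEdges_cast]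
      exact he₀
    · intro e hsub
      unfold IsSubdivisionEdge at hsub
      erw [hedge e, length_cast'] at hsub
      exact hc.2 e hsub
  · -- factorization
    refine hom_ext ?_ ?_
    · intro a
      exact (mergeProj_key w₁ w₂ hne hww a).symm
    · intro a b f
      obtain ⟨d, h1, h2⟩ := f
      subst h1; subst h2
      refine HEq.symm ?_
      show HEq (pmap (mergePhi φ w₁ w₂ hne hacyc hww)
        (pmap (mergeMu G w₁ w₂ hne hacyc) (Quiver.Hom.toPath (edgeHom G d)))) (edgePath φ d)
      have h3 : pmap (mergeMu G w₁ w₂ hne hacyc) (Quiver.Hom.toPath (edgeHom G d)) =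
          Quiver.Hom.toPath (edgeHom (mergeNet G w₁ w₂ hne hacyc) d) := edgePath_mkHom _ _ d
      rw [h3]
      have h4 : pmap (mergePhi φ w₁ w₂ hne hacyc hww)
          (Quiver.Hom.toPath (edgeHom (mergeNet G w₁ w₂ hne hacyc) d)) =
          (edgePath φ d).cast
            (mergeProj_key w₁ w₂ hne hww (G.src d)).symm
            (mergeProj_key w₁ w₂ hne hww (G.tgt d)).symm := by
        unfold mergePhi; apply edgePath_mkHom
      erw [h4]
      exact Quiver.Path.cast_heq _ _ _
  · -- measure
    have h1 : Nat.card (mergeNet G w₁ w₂ hne hacyc).V < Nat.card G.V :=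
      nat_card_subtype_lt _ w₂ (by simp)
    have h2 : Nat.card (mergeNet G w₁ w₂ hne hacyc).E = Nat.card G.E := rfl
    omega

end CaseC
section CaseIso

variable {G H : CausalNet}

theorem caseIso {φ : G ⟶ H} (hc : IsCoarseGraining φ) (hnd : ¬ DupEdges φ)
    (hnc : ∀ e, ¬ IsContractionEdge φ e) (hinj : Function.Injective (vmap φ)) :
    IsIso φ := by
  classical
  have hseg : ∀ e : G.E, ∃ h, MapsToEdge φ e h := fun e => segment_exists hc e (hnc e)
  choose em hem using hseg
  have heminj : Function.Injective em := by
    intro d d' hdd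
    by_contra hne
    refine hnd ⟨d, d', hne, ?_, ?_, ?_⟩
    · exact hinj (((mapsToEdge_props φ (hem d)).1).trans
        (by rw [hdd]; exact ((mapsToEdge_props φ (hem d')).1).symm))
    · exact hinj (((mapsToEdge_props φ (hem d)).2.1).trans
        (by rw [hdd]; exact ((mapsToEdge_props φ (hem d')).2.1).symm))
    · have h1 := (heq_toPath_of_single _ _ (hem d)).2.2
      have h2 := (heq_toPath_of_single _ _ (hem d')).2.2
      rw [hdd] at h1
      exact h1.trans h2.symm
  have hemsurj : Function.Surjective em := by
    intro h
    obtain ⟨e, he⟩ := hc.1.2 h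
    refine ⟨e, ?_⟩
    have h1 : pathEdges (edgePath φ e) = [em e] := hem e
    rw [he] at h1
    have h2 : h = em e := by simpa using h1
    exact h2.symm
  have hvmsurj : Function.Surjective (vmap φ) := hc.1.1
  let eqv : G.V ≃ H.V := Equiv.ofBijective (vmap φ) ⟨hinj, hvmsurj⟩
  let eqe : G.E ≃ H.E := Equiv.ofBijective em ⟨heminj, hemsurj⟩
  have hsrcInv : ∀ h : H.E, G.src (eqe.symm h) = eqv.symm (H.src h) := by
    intro h
    apply hinj
    have h1 : vmap φ (G.src (eqe.symm h)) = H.src (em (eqe.symm h)) :=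
      (mapsToEdge_props φ (hem _)).1
    have h2 : em (eqe.symm h) = h := eqe.apply_symm_apply h
    have h3 : vmap φ (eqv.symm (H.src h)) = H.src h := eqv.apply_symm_apply (H.src h)
    rw [h1, h2, h3]
  have htgtInv : ∀ h : H.E, G.tgt (eqe.symm h) = eqv.symm (H.tgt h) := by
    intro h
    apply hinj
    have h1 : vmap φ (G.tgt (eqe.symm h)) = H.tgt (em (eqe.symm h)) :=
      (mapsToEdge_props φ (hem _)).2.1
    have h2 : em (eqe.symm h) = h := eqe.apply_symm_apply h
    have h3 : vmap φ (eqv.symm (H.tgt h)) = H.tgt h := eqv.apply_symm_apply (H.tgt h)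
    rw [h1, h2, h3]
  let ψ : H ⟶ G := mkHom (G := H) (H := G) (fun v => eqv.symm v)
    (fun h => (Quiver.Hom.toPath (edgeHom G (eqe.symm h))).cast (hsrcInv h) (htgtInv h))
  have hφψ : φ ≫ ψ = 𝟙 G := by
    refine hom_ext ?_ ?_
    · intro a
      exact eqv.symm_apply_apply a
    · intro a b f
      obtain ⟨d, h1, h2⟩ := f
      subst h1; subst h2
      show HEq (pmap ψ (pmap φ (Quiver.Hom.toPath (edgeHom G d))))
        (pmap (𝟙 G) (Quiver.Hom.toPath (edgeHom G d)))
      rw [pmap_id]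
      refine HEq.trans (heq_pmap ψ (edgePath φ d)
        (Quiver.Hom.toPath (edgeHom H (em d)))
        (mapsToEdge_props φ (hem d)).1 (mapsToEdge_props φ (hem d)).2.1
        (heq_toPath_of_single _ _ (hem d)).2.2) ?_
      have h4 : pmap ψ (Quiver.Hom.toPath (edgeHom H (em d))) =
          (Quiver.Hom.toPath (edgeHom G (eqe.symm (em d)))).cast
            (hsrcInv (em d)) (htgtInv (em d)) := by
        show edgePath ψ (em d) = _
        show edgePath (mkHom (fun v => eqv.symm v) (fun h => (Quiver.Hom.toPath (edgeHom G (eqe.symm h))).cast (hsrcInv h) (htgtInv h))) _ = _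
        apply edgePath_mkHom
      rw [h4]
      refine HEq.trans (Quiver.Path.cast_heq _ _ _) ?_
      have hh : eqe.symm (em d) = d := eqe.symm_apply_apply d
      rw [hh]; exact HEq.rfl
  have hψφ : ψ ≫ φ = 𝟙 H := by
    refine hom_ext ?_ ?_
    · intro a
      exact eqv.apply_symm_apply a
    · intro a b f
      obtain ⟨h, h1, h2⟩ := f
      subst h1; subst h2
      show HEq (pmap φ (pmap ψ (Quiver.Hom.toPath (edgeHom H h))))
        (pmap (𝟙 H) (Quiver.Hom.toPath (edgeHom H h)))
      rw [pmap_id]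
      have h4 : pmap ψ (Quiver.Hom.toPath (edgeHom H h)) =
          (Quiver.Hom.toPath (edgeHom G (eqe.symm h))).cast (hsrcInv h) (htgtInv h) := by
        show edgePath ψ h = _
        show edgePath (mkHom (fun v => eqv.symm v) (fun h => (Quiver.Hom.toPath (edgeHom G (eqe.symm h))).cast (hsrcInv h) (htgtInv h))) _ = _
        apply edgePath_mkHom
      erw [h4, pmap_cast]
      refine HEq.trans (Quiver.Path.cast_heq _ _ _) ?_
      refine HEq.trans (heq_toPath_of_single _ _ (hem (eqe.symm h))).2.2 ?_
      have hh : em (eqe.symm h) = h := eqe.apply_symm_apply h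
      rw [hh]; exact HEq.rfl
  exact ⟨ψ, hφψ, hψφ⟩

end CaseIso
section ContractDefs

variable {G H : CausalNet}

theorem mergeProj_val_of_ne (w₁ w₂ : G.V) (hne : w₁ ≠ w₂) (v : G.V) (hv : v ≠ w₂) :
    (mergeProj G w₁ w₂ hne v).val = v := by
  unfold mergeProj
  rw [dif_neg hv]

theorem mergeProj_val_w₂ (w₁ w₂ : G.V) (hne : w₁ ≠ w₂) :
    (mergeProj G w₁ w₂ hne w₂).val = w₁ := by
  unfold mergeProj
  rw [dif_pos rfl]

theorem mergeProj_eq_w₁_cases (w₁ w₂ : G.V) (hne : w₁ ≠ w₂) (v : G.V)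
    (h : mergeProj G w₁ w₂ hne v = ⟨w₁, hne⟩) : v = w₁ ∨ v = w₂ := by
  by_cases hv : v = w₂
  · exact Or.inr hv
  · left
    have := congrArg Subtype.val h
    rwa [mergeProj_val_of_ne w₁ w₂ hne v hv] at this

theorem contract_acyclic (G : CausalNet) (e : G.E) (hne : G.src e ≠ G.tgt e)
    (huniq : ∀ d, G.src d = G.src e → G.tgt d = G.tgt e → d = e)
    (hgap : ∀ x, x ≠ G.src e → x ≠ G.tgt e →
      Reaches G (G.src e) x → Reaches G x (G.tgt e) → False) :
    NoCycleData {v : G.V // v ≠ G.tgt e} {d : G.E // d ≠ e}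
      (fun d => mergeProj G (G.src e) (G.tgt e) hne (G.src d.val))
      (fun d => mergeProj G (G.src e) (G.tgt e) hne (G.tgt d.val)) := by
  letI : Preorder {v : G.V // v ≠ G.tgt e} := {
    le := fun x y => Reaches G x.val y.val ∨
      (Reaches G x.val (G.tgt e) ∧ Reaches G (G.src e) y.val)
    le_refl := fun x => Or.inl (reaches_refl _)
    le_trans := by
      rintro x y z (h1 | ⟨h1a, h1b⟩) (h2 | ⟨h2a, h2b⟩)
      · exact Or.inl (reaches_trans h1 h2)
      · exact Or.inr ⟨reaches_trans h1 h2a, h2b⟩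
      · exact Or.inr ⟨h1a, reaches_trans h1b h2⟩
      · exact Or.inr ⟨h1a, h2b⟩ }
  apply noCycleData_of_lt
  intro d
  rw [lt_iff_le_not_ge]
  have hST : G.src d.val ≠ G.tgt d.val := no_loop d.val
  have hedge : Reaches G (G.src d.val) (G.tgt d.val) := reaches_of_edge d.val
  have hposTS : ¬ Reaches G (G.tgt d.val) (G.src d.val) :=
    not_reaches_of_pos (Quiver.Hom.toPath (edgeHom G d.val)) (by rw [length_toPath]; omega)
  constructor
  · -- ≤
    show Reaches G _ _ ∨ _
    by_cases hT : G.tgt d.val = G.tgt e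
    · have hS : G.src d.val ≠ G.tgt e := fun h => hST (h.trans hT.symm)
      refine Or.inr ?_
      rw [mergeProj_val_of_ne _ _ hne _ hS, hT, mergeProj_val_w₂]
      exact ⟨hT ▸ hedge, reaches_refl _⟩
    · rw [mergeProj_val_of_ne _ _ hne _ hT]
      by_cases hS : G.src d.val = G.tgt e
      · rw [hS, mergeProj_val_w₂]
        exact Or.inl (reaches_trans (reaches_of_edge e) (hS ▸ hedge))
      · rw [mergeProj_val_of_ne _ _ hne _ hS]
        exact Or.inl hedge
  · -- ¬ ≥
    intro hR
    have hR' : Reaches G (mergeProj G (G.src e) (G.tgt e) hne (G.tgt d.val)).val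
        (mergeProj G (G.src e) (G.tgt e) hne (G.src d.val)).val ∨
        (Reaches G (mergeProj G (G.src e) (G.tgt e) hne (G.tgt d.val)).val (G.tgt e) ∧
         Reaches G (G.src e) (mergeProj G (G.src e) (G.tgt e) hne (G.src d.val)).val) := hR
    clear hR
    rename' hR' => hR
    by_cases hS : G.src d.val = G.tgt e <;> by_cases hT : G.tgt d.val = G.tgt e
    · exact hST (hS.trans hT.symm)
    · -- S = w₂, T ≠ w₂
      rw [mergeProj_val_of_ne _ _ hne _ hT, hS, mergeProj_val_w₂] at hR
      rcases hR with h | ⟨h, _⟩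
      · -- Reaches T w₁, then T ⤳ w₁ ⤳ w₂ = S
        exact hposTS (reaches_trans h (hS ▸ reaches_of_edge e))
      · exact hposTS (hS ▸ h)
    · -- S ≠ w₂, T = w₂
      rw [mergeProj_val_of_ne _ _ hne _ hS, hT, mergeProj_val_w₂] at hR
      have hws : Reaches G (G.src e) (G.src d.val) := by
        rcases hR with h | ⟨_, h⟩ <;> exact h
      by_cases hSw₁ : G.src d.val = G.src e
      · exact d.2 (huniq d.val hSw₁ hT)
      · exact hgap (G.src d.val) hSw₁ hS hws (hT ▸ hedge)
    · -- neither
      rw [mergeProj_val_of_ne _ _ hne _ hS, mergeProj_val_of_ne _ _ hne _ hT] at hR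
      rcases hR with h | ⟨hT2, hw1S⟩
      · exact hposTS h
      · by_cases hSw₁ : G.src d.val = G.src e
        · have hTw₁ : G.tgt d.val ≠ G.src e := fun h => hST (hSw₁.trans h.symm)
          exact hgap (G.tgt d.val) hTw₁ hT (hSw₁ ▸ hedge) hT2
        · exact hgap (G.src d.val) hSw₁ hS hw1S (reaches_trans hedge hT2)

noncomputable def contractNet (G : CausalNet) (e : G.E) (hne : G.src e ≠ G.tgt e)
    (hacyc : NoCycleData {v : G.V // v ≠ G.tgt e} {d : G.E // d ≠ e}
      (fun d => mergeProj G (G.src e) (G.tgt e) hne (G.src d.val))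
      (fun d => mergeProj G (G.src e) (G.tgt e) hne (G.tgt d.val))) : CausalNet where
  V := {v : G.V // v ≠ G.tgt e}
  E := {d : G.E // d ≠ e}
  src d := mergeProj G (G.src e) (G.tgt e) hne (G.src d.val)
  tgt d := mergeProj G (G.src e) (G.tgt e) hne (G.tgt d.val)
  fintypeV := Fintype.ofFinite _
  fintypeE := Fintype.ofFinite _
  acyclic := hacyc

open Classical in
noncomputable def contractFe (G : CausalNet) (e : G.E) (hne : G.src e ≠ G.tgt e) (hacyc)
    (d : G.E) :
    @Quiver.Path (contractNet G e hne hacyc).V (CausalNet.quiver (contractNet G e hne hacyc))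
      (mergeProj G (G.src e) (G.tgt e) hne (G.src d))
      (mergeProj G (G.src e) (G.tgt e) hne (G.tgt d)) :=
  if hd : d = e then
    @Quiver.Path.cast (contractNet G e hne hacyc).V
      (CausalNet.quiver (contractNet G e hne hacyc)) _ _ _ _
      rfl
      (show mergeProj G (G.src e) (G.tgt e) hne (G.src d) =
        mergeProj G (G.src e) (G.tgt e) hne (G.tgt d) by
          rw [hd, mergeProj_w₁, mergeProj_w₂])
      Quiver.Path.nil
  else Quiver.Hom.toPath (edgeHom (contractNet G e hne hacyc) ⟨d, hd⟩)

noncomputable def contractMu (G : CausalNet) (e : G.E) (hne : G.src e ≠ G.tgt e) (hacyc) :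
    G ⟶ contractNet G e hne hacyc :=
  mkHom (mergeProj G (G.src e) (G.tgt e) hne) (contractFe G e hne hacyc)

noncomputable def contractPhi (φ : G ⟶ H) (e : G.E) (hne : G.src e ≠ G.tgt e) (hacyc)
    (hww : vmap φ (G.src e) = vmap φ (G.tgt e)) : contractNet G e hne hacyc ⟶ H :=
  mkHom (G := contractNet G e hne hacyc) (fun v' => vmap φ v'.val)
    (fun d => (edgePath φ d.val).cast
      (mergeProj_key (G.src e) (G.tgt e) hne hww (G.src d.val)).symm
      (mergeProj_key (G.src e) (G.tgt e) hne hww (G.tgt d.val)).symm)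

theorem connected_of_subsingleton (K : CausalNet) (hs : Subsingleton K.V)
    (hn : Nonempty K.V) : Connected K := by
  show (undirected K).Connected
  rw [SimpleGraph.connected_iff]
  refine ⟨fun u v => ?_, hn⟩
  rw [Subsingleton.elim u v]

end ContractDefs
section CaseB

variable {G H : CausalNet}

theorem list_sum_zero : ∀ (l : List ℕ), l.sum = 0 → ∀ x ∈ l, x = 0 := by
  intro l
  induction l with
  | nil => intro _ x hx; simp at hx
  | cons a l ih =>
      intro hl x hx
      simp only [List.sum_cons] at hl
      rcases List.mem_cons.1 hx with rfl | hx
      · omega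
      · exact ih (by omega) x hx

theorem caseB {φ : G ⟶ H} (hc : IsCoarseGraining φ) (hnd : ¬ DupEdges φ)
    (hex : ∃ d, IsContractionEdge φ d) :
    ∃ (G' : CausalNet) (μ : G ⟶ G') (φ' : G' ⟶ H),
      IsContractOneEdge μ ∧ IsCoarseGraining φ' ∧ φ = μ ≫ φ' ∧
      Nat.card G'.V + Nat.card G'.E < Nat.card G.V + Nat.card G.E := by
  classical
  obtain ⟨d₀, hd₀⟩ := hex
  obtain ⟨e, heS, hmin⟩ := Finset.exists_min_image
    (Finset.univ.filter fun d => IsContractionEdge φ d)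
    (fun d => rho G (G.tgt d)) ⟨d₀, by simp [hd₀]⟩
  have he : IsContractionEdge φ e := by simpa using heS
  have hmin' : ∀ d, IsContractionEdge φ d → rho G (G.tgt e) ≤ rho G (G.tgt d) :=
    fun d hd => hmin d (by simp [hd])
  have hne : G.src e ≠ G.tgt e := no_loop e
  have hww : vmap φ (G.src e) = vmap φ (G.tgt e) := Quiver.Path.eq_of_length_zero _ he
  have huniq : ∀ d, G.src d = G.src e → G.tgt d = G.tgt e → d = e := by
    intro d hs ht
    by_contra hd
    apply hnd
    have hdc : IsContractionEdge φ d :=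
      contraction_of_same_image hc d (by rw [hs, ht]; exact hww)
    exact ⟨e, d, fun h => hd h.symm, hs.symm, ht.symm,
      heq_of_length_zero _ _ (congrArg (vmap φ) hs.symm) he hdc⟩
  have hgap : ∀ x, x ≠ G.src e → x ≠ G.tgt e →
      Reaches G (G.src e) x → Reaches G x (G.tgt e) → False := by
    rintro x hx1 hx2 ⟨p⟩ ⟨q⟩
    have hz : (pmap φ (p.comp q)).length = 0 :=
      length_zero_of_endpoints_eq (pmap φ (p.comp q)) hww
    rw [length_pmap] at hz
    have hall : ∀ d ∈ pathEdges (p.comp q), (edgePath φ d).length = 0 := by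
      intro d hd
      exact list_sum_zero _ hz _ (List.mem_map_of_mem hd)
    cases p with
    | nil => exact hx1 rfl
    | cons p₀ f =>
        have hf : IsContractionEdge φ (homEdge f) := by
          apply hall (homEdge f)
          rw [pathEdges_comp, pathEdges_cons]
          simp
        have h1 := hmin' (homEdge f) hf
        have h2 : G.tgt (homEdge f) = x := f.2.2
        have hq0 : q.length ≠ 0 := fun h0 => hx2 (Quiver.Path.eq_of_length_zero q h0)
        have h3 : rho G x < rho G (G.tgt e) := rho_strict q hq0
        rw [h2] at h1
        omega
  have hacyc := contract_acyclic G e hne huniq hgap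
  refine ⟨contractNet G e hne hacyc, contractMu G e hne hacyc,
    contractPhi φ e hne hacyc hww, ?_, ?_, ?_, ?_⟩
  · -- IsContractOneEdge
    have hedgeμ : ∀ d : G.E, edgePath (contractMu G e hne hacyc) d =
        contractFe G e hne hacyc d := by
      intro d
      unfold contractMu
      apply edgePath_mkHom
    have hcontrμ : ∀ d : G.E, IsContractionEdge (contractMu G e hne hacyc) d ↔ d = e := by
      intro d
      unfold IsContractionEdge
      rw [hedgeμ d]
      unfold contractFe
      split
      · rename_i hd
        erw [length_cast']
        exact iff_of_true rfl hd
      · rename_i hd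
        erw [length_toPath]
        exact iff_of_false (by omega) hd
    have hmapsμ : ∀ (d : G.E) (hd : d ≠ e),
        MapsToEdge (contractMu G e hne hacyc) d ⟨d, hd⟩ := by
      intro d hd
      unfold MapsToEdge
      rw [hedgeμ d]
      unfold contractFe
      erw [dif_neg hd, pathEdges_toPath]
      rfl
    have hcharμ : ∀ (d : G.E) (h : (contractNet G e hne hacyc).E),
        MapsToEdge (contractMu G e hne hacyc) d h → d ≠ e ∧ h.val = d := by
      intro d h hm
      unfold MapsToEdge at hm
      rw [hedgeμ d] at hm
      unfold contractFe at hm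
      split at hm
      · erw [pathEdges_cast, pathEdges_nil] at hm
        simp at hm
      · rename_i hd
        erw [pathEdges_toPath] at hm
        simp only [List.cons.injEq, and_true] at hm
        exact ⟨hd, by rw [← hm]; rfl⟩
    have hvme : vmap (contractMu G e hne hacyc) (G.src e) =
        vmap (contractMu G e hne hacyc) (G.tgt e) := by
      show mergeProj G (G.src e) (G.tgt e) hne (G.src e) =
        mergeProj G (G.src e) (G.tgt e) hne (G.tgt e)
      rw [mergeProj_w₁, mergeProj_w₂]
    refine ⟨⟨⟨⟨⟨⟨?_, ?_⟩, ?_⟩, ?_⟩, ?_⟩,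
      ⟨G.src e, G.tgt e, hne, hvme, ⟨e, rfl, rfl⟩, ?_, ?_⟩⟩, ?_⟩
    · intro v'
      exact ⟨v'.val, mergeProj_fix _ _ hne v'⟩
    · intro h
      exact ⟨h.val, by have := hmapsμ h.val h.2; erw [Subtype.coe_eta] at this; exact this⟩
    · intro d hsub
      unfold IsSubdivisionEdge at hsub
      rw [hedgeμ d] at hsub
      unfold contractFe at hsub
      split at hsub
      · erw [length_cast'] at hsub
        simp [Quiver.Path.length] at hsub
      · erw [length_toPath] at hsub
        omega
    · intro h d d' h1 h2
      exact ((hcharμ d h h1).2).symm.trans (hcharμ d' h h2).2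
    · -- fibers connected
      intro v'
      by_cases hv : v'.val = G.src e
      · have hv' : v' = ⟨G.src e, hne⟩ := Subtype.ext hv
        subst hv'
        show (undirected _).Connected
        rw [SimpleGraph.connected_iff]
        have hmem : ∀ w : G.V, vmap (contractMu G e hne hacyc) w = ⟨G.src e, hne⟩ →
            w = G.src e ∨ w = G.tgt e := by
          intro w hw
          exact mergeProj_eq_w₁_cases _ _ hne w hw
        have hsrcmem : vmap (contractMu G e hne hacyc) (G.src e) = ⟨G.src e, hne⟩ :=
          mergeProj_w₁ _ _ hne
        have htgtmem : vmap (contractMu G e hne hacyc) (G.tgt e) = ⟨G.src e, hne⟩ :=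
          mergeProj_w₂ _ _ hne
        have hemem : IsContractionEdge (contractMu G e hne hacyc) e ∧
            vmap (contractMu G e hne hacyc) (G.src e) = ⟨G.src e, hne⟩ :=
          ⟨(hcontrμ e).2 rfl, hsrcmem⟩
        constructor
        · intro x y
          rcases hmem x.val x.2 with hx | hx <;> rcases hmem y.val y.2 with hy | hy
          · rw [show x = y from Subtype.ext (hx.trans hy.symm)]
          · refine SimpleGraph.Adj.reachable ?_
            refine ⟨fun hxy => hne ?_, ⟨e, hemem⟩, Or.inl ⟨Subtype.ext ?_, Subtype.ext ?_⟩⟩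
            · have hval := congrArg Subtype.val hxy
              rw [hx, hy] at hval
              exact hval
            · exact hx.symm
            · exact hy.symm
          · refine (SimpleGraph.Adj.reachable ?_).symm
            refine ⟨fun hxy => hne ?_, ⟨e, hemem⟩, Or.inl ⟨Subtype.ext ?_, Subtype.ext ?_⟩⟩
            · have hval := congrArg Subtype.val hxy
              rw [hy, hx] at hval
              exact hval
            · exact hy.symm
            · exact hx.symm
          · rw [show x = y from Subtype.ext (hx.trans hy.symm)]
        · exact ⟨⟨G.src e, hsrcmem⟩⟩
      · apply connected_of_subsingleton
        · constructor
          intro x y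
          have key : ∀ w : G.V, vmap (contractMu G e hne hacyc) w = v' → w = v'.val := by
            intro w hw
            have hval : (mergeProj G (G.src e) (G.tgt e) hne w).val = v'.val :=
              congrArg Subtype.val hw
            by_cases hw2 : w = G.tgt e
            · exfalso
              apply hv
              rw [hw2, mergeProj_val_w₂] at hval
              rw [← hval]
            · rwa [mergeProj_val_of_ne _ _ hne _ hw2] at hval
          exact Subtype.ext ((key x.val x.2).trans (key y.val y.2).symm)
        · exact ⟨⟨v'.val, mergeProj_fix _ _ hne v'⟩⟩
    · -- contraction edges characterization
      intro d
      rw [hcontrμ d]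
      constructor
      · rintro rfl; exact ⟨rfl, rfl⟩
      · rintro ⟨h1, h2⟩; exact huniq d h1 h2
    · -- vmap pair condition
      intro u u' huu
      exact mergeProj_cases _ _ hne u u' huu
    · -- ContractedPair uniqueness
      intro w₁' w₂' hcp
      have he' := (hcp.2.2.2 e).1 ((hcontrμ e).2 rfl)
      refine ⟨e, he', ?_⟩
      intro d hd
      exact huniq d (hd.1.trans he'.1.symm) (hd.2.trans he'.2.symm)
  · -- φ' coarse
    have hedgeφ' : ∀ d : (contractNet G e hne hacyc).E,
        edgePath (contractPhi φ e hne hacyc hww) d = (edgePath φ d.val).cast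
          (mergeProj_key (G.src e) (G.tgt e) hne hww (G.src d.val)).symm
          (mergeProj_key (G.src e) (G.tgt e) hne hww (G.tgt d.val)).symm := by
      intro d
      unfold contractPhi
      apply edgePath_mkHom
    refine ⟨⟨?_, ?_⟩, ?_⟩
    · intro v
      obtain ⟨w, hw⟩ := hc.1.1 v
      refine ⟨mergeProj G (G.src e) (G.tgt e) hne w, ?_⟩
      show vmap φ ((mergeProj G (G.src e) (G.tgt e) hne w).val) = v
      rw [mergeProj_key _ _ hne hww w]
      exact hw
    · intro h
      obtain ⟨e₀, he₀⟩ := hc.1.2 h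
      have hne0 : e₀ ≠ e := by
        intro hh
        subst hh
        exact mapsToEdge_not_contraction he₀ he
      refine ⟨⟨e₀, hne0⟩, ?_⟩
      unfold MapsToEdge
      erw [hedgeφ', pathEdges_cast]
      exact he₀
    · intro d hsub
      unfold IsSubdivisionEdge at hsub
      erw [hedgeφ', length_cast'] at hsub
      exact hc.2 d.val hsub
  · -- factorization
    refine hom_ext ?_ ?_
    · intro a
      exact (mergeProj_key _ _ hne hww a).symm
    · intro a b f
      obtain ⟨d, h1, h2⟩ := f
      subst h1; subst h2
      refine HEq.symm ?_
      show HEq (pmap (contractPhi φ e hne hacyc hww)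
        (pmap (contractMu G e hne hacyc) (Quiver.Hom.toPath (edgeHom G d)))) (edgePath φ d)
      have h3 : pmap (contractMu G e hne hacyc) (Quiver.Hom.toPath (edgeHom G d)) =
          contractFe G e hne hacyc d := by
        unfold contractMu
        apply edgePath_mkHom
      rw [h3]
      unfold contractFe
      by_cases hd : d = e
      · rw [dif_pos hd]
        refine heq_of_length_zero _ _ ?_ ?_ ?_
        · exact mergeProj_key _ _ hne hww (G.src d)
        · apply length_pmap_zero
          erw [length_cast']
          rfl
        · rw [hd]; exact he
      · rw [dif_neg hd]
        have h4 : pmap (contractPhi φ e hne hacyc hww)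
            (Quiver.Hom.toPath (edgeHom (contractNet G e hne hacyc) ⟨d, hd⟩)) =
            (edgePath φ d).cast
              (mergeProj_key (G.src e) (G.tgt e) hne hww (G.src d)).symm
              (mergeProj_key (G.src e) (G.tgt e) hne hww (G.tgt d)).symm := by
          unfold contractPhi
          apply edgePath_mkHom
        erw [h4]
        exact Quiver.Path.cast_heq _ _ _
  · -- measure
    have h1 : Nat.card (contractNet G e hne hacyc).V < Nat.card G.V :=
      nat_card_subtype_lt _ (G.tgt e) (by simp)
    have h2 : Nat.card (contractNet G e hne hacyc).E < Nat.card G.E :=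
      nat_card_subtype_lt _ e (by simp)
    omega

end CaseB
section Main

variable {G H : CausalNet}

theorem forward_aux {H : CausalNet} : ∀ (n : ℕ) (G : CausalNet) (φ : G ⟶ H),
    Nat.card G.V + Nat.card G.E < n → IsCoarseGraining φ →
    IsCompOf IsFundamentalCoarseGraining φ := by
  intro n
  induction n with
  | zero => intro G φ h; omega
  | succ n ih =>
      intro G φ hn hc
      by_cases hdup : DupEdges φ
      · obtain ⟨G', μ, φ', hμ, hφ', heq, hlt⟩ := caseA hc hdup
        rw [heq]
        exact IsCompOf.comp μ φ' (IsCompOf.of μ (Or.inr (Or.inr (Or.inl hμ))))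
          (ih G' φ' (by omega) hφ')
      by_cases hcontr : ∃ d, IsContractionEdge φ d
      · obtain ⟨G', μ, φ', hμ, hφ', heq, hlt⟩ := caseB hc hdup hcontr
        rw [heq]
        exact IsCompOf.comp μ φ' (IsCompOf.of μ (Or.inr (Or.inr (Or.inr hμ))))
          (ih G' φ' (by omega) hφ')
      by_cases hinj : Function.Injective (vmap φ)
      · exact IsCompOf.of φ (Or.inl (caseIso hc hdup (fun e he => hcontr ⟨e, he⟩) hinj))
      · simp only [Function.Injective] at hinj
        push_neg at hinj
        obtain ⟨w₁, w₂, hww, hne⟩ := hinj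
        obtain ⟨G', μ, φ', hμ, hφ', heq, hlt⟩ :=
          caseC hc (fun e he => hcontr ⟨e, he⟩) w₁ w₂ hne hww
        rw [heq]
        exact IsCompOf.comp μ φ' (IsCompOf.of μ (Or.inr (Or.inl hμ)))
          (ih G' φ' (by omega) hφ')

end Main

theorem coarseGraining_iff_comp_fundamental {G H : CausalNet} (lam : G ⟶ H) :
    IsCoarseGraining lam ↔ IsCompOf IsFundamentalCoarseGraining lam := by
  constructor
  · intro hc
    exact forward_aux (Nat.card G.V + Nat.card G.E + 1) G lam (by omega) hc
  · exact compOf_coarse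

end CausalNets
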